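/- Let F be a field of characteristic p > 0 and ℛ = F[x,y,z] with standard grading. For e ≥ 2 and q = p^e, the monomial x·y^{q/p − 1}·z^{q − q/p − 1} ∈ ℛ_{q−1} does not lie in 𝒯_{e₁} ⋇ 𝒯_{e₂} for any positive integers e₁, e₂ with e₁ + e₂ = e. Consequently the twisted ring 𝒯(F[x,y,z]) is not a finitely generated ring extension of 𝒯_0 = F. -/

import Mathlib

open MvPolynomial

lemma degree_fin3_aux (u : Fin 3 →₀ ℕ) : u.degree = u 0 + u 1 + u 2 := by
  rw [Finsupp.degree, ← Fin.sum_univ_three (fun i => u i)]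
  exact Finset.sum_subset (Finset.subset_univ _) (fun i _ hi => by
    simpa using Finsupp.notMem_support_iff.mp hi)

lemma coeff_pow_char_pow_aux {F : Type*} [Field F] {p : ℕ} [Fact p.Prime] [CharP F p]
    (b : MvPolynomial (Fin 3) F) (k : ℕ) (v : Fin 3 →₀ ℕ)
    (h : MvPolynomial.coeff v (b ^ p ^ k) ≠ 0) : ∃ d : Fin 3 →₀ ℕ, v = p ^ k • d := by
  conv at h => rw [b.as_sum]
  rw [sum_pow_char_pow] at h
  simp_rw [monomial_pow] at h
  rw [MvPolynomial.coeff_sum] at h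
  obtain ⟨d, hd, hne⟩ := Finset.exists_ne_zero_of_sum_ne_zero h
  rw [coeff_monomial] at hne
  split_ifs at hne with hv
  · exact ⟨d, hv.symm⟩
  · exact absurd rfl hne

/-- Let `F` be a field of characteristic `p > 0` and `ℛ = F[x,y,z]` standard
graded; `𝒯_e = ℛ_{p^e−1}` with twisted product `a ⋇ b = a·b^{p^{e₁}}` for `a ∈ 𝒯_{e₁}`,
`b ∈ 𝒯_{e₂}`.  For `e ≥ 2` and `q = p^e`, the monomial `x·y^{q/p−1}·z^{q−q/p−1} ∈ ℛ_{q−1}`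
does not lie in `𝒯_{e₁} ⋇ 𝒯_{e₂}` (the `F`-span of such twisted products) for any positive
integers `e₁, e₂` with `e₁ + e₂ = e`.  (Consequently `𝒯(F[x,y,z])` is not a finitely
generated ring extension of `𝒯_0 = F`.) -/
theorem twisted_three_variables_not_finitely_generated (F : Type*) [Field F] (p : ℕ)
    [Fact p.Prime] [CharP F p] (e : ℕ) (he : 2 ≤ e) (e₁ e₂ : ℕ) (he₁ : 1 ≤ e₁)
    (he₂ : 1 ≤ e₂) (hsum : e₁ + e₂ = e) :
    (X 0 : MvPolynomial (Fin 3) F) * (X 1) ^ (p ^ (e - 1) - 1) *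
        (X 2) ^ (p ^ e - p ^ (e - 1) - 1) ∉
      Submodule.span F {f : MvPolynomial (Fin 3) F |
        ∃ a ∈ homogeneousSubmodule (Fin 3) F (p ^ e₁ - 1),
          ∃ b ∈ homogeneousSubmodule (Fin 3) F (p ^ e₂ - 1), f = a * b ^ p ^ e₁} := by
  have hp2 : 2 ≤ p := (Fact.out : p.Prime).two_le
  have hq2 : 2 ≤ p ^ e₁ := le_trans hp2 (Nat.le_self_pow (by omega) p)
  have hdvd : p ^ e₁ ∣ p ^ (e - 1) := pow_dvd_pow p (by omega)
  set m : Fin 3 →₀ ℕ := Finsupp.single 0 1 + Finsupp.single 1 (p ^ (e - 1) - 1)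
      + Finsupp.single 2 (p ^ e - p ^ (e - 1) - 1) with hm
  intro hmem
  have hker : Submodule.span F {f : MvPolynomial (Fin 3) F |
        ∃ a ∈ homogeneousSubmodule (Fin 3) F (p ^ e₁ - 1),
          ∃ b ∈ homogeneousSubmodule (Fin 3) F (p ^ e₂ - 1), f = a * b ^ p ^ e₁} ≤
      LinearMap.ker (lcoeff F m) := by
    rw [Submodule.span_le]
    rintro f ⟨a, ha, b, hb, rfl⟩
    simp only [SetLike.mem_coe, LinearMap.mem_ker, lcoeff_apply]
    rw [coeff_mul]
    apply Finset.sum_eq_zero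
    rintro ⟨u, v⟩ huv
    rw [Finset.HasAntidiagonal.mem_antidiagonal] at huv
    by_contra hne
    have hu : coeff u a ≠ 0 := fun h => hne (by simp [h])
    have hv : coeff v (b ^ p ^ e₁) ≠ 0 := fun h => hne (by simp [h])
    obtain ⟨d, rfl⟩ := coeff_pow_char_pow_aux b e₁ v hv
    have hudeg : u 0 + u 1 + u 2 = p ^ e₁ - 1 := by
      rw [← degree_fin3_aux, Finsupp.degree_eq_weight_one]
      exact ha hu
    have h0 : u 0 + p ^ e₁ * d 0 = m 0 := by
      have := DFunLike.congr_fun huv 0; simpa using this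
    have h1 : u 1 + p ^ e₁ * d 1 = m 1 := by
      have := DFunLike.congr_fun huv 1; simpa using this
    have hm0 : m 0 = 1 := by simp [hm, Finsupp.single_apply]
    have hm1 : m 1 = p ^ (e - 1) - 1 := by simp [hm, Finsupp.single_apply]
    rw [hm0] at h0
    rw [hm1] at h1
    -- from h0 : u 0 = 1 and d 0 = 0
    have hd0 : p ^ e₁ * d 0 = 0 := by
      by_contra hd0
      have hd0' : d 0 ≠ 0 := fun h => hd0 (by rw [h, Nat.mul_zero])
      have : p ^ e₁ ≤ p ^ e₁ * d 0 := Nat.le_mul_of_pos_right _ (Nat.pos_of_ne_zero hd0')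
      omega
    have hu0 : u 0 = 1 := by omega
    -- p^e₁ divides u 1 + 1
    obtain ⟨c, hc⟩ := hdvd
    have hpd : 1 ≤ p ^ (e - 1) := Nat.pow_pos (by omega)
    have hd1c : d 1 < c := by
      have h' : p ^ e₁ * d 1 < p ^ e₁ * c := by omega
      exact Nat.lt_of_mul_lt_mul_left h'
    have hmul : p ^ e₁ * (c - d 1) = u 1 + 1 := by
      have hsplit : p ^ e₁ * (c - d 1) + p ^ e₁ * d 1 = p ^ e₁ * c := by
        rw [← Nat.mul_add]
        congr 1
        omega
      omega
    have hge : p ^ e₁ ≤ p ^ e₁ * (c - d 1) := Nat.le_mul_of_pos_right _ (by omega)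
    omega
  have h0 := hker hmem
  rw [LinearMap.mem_ker, lcoeff_apply] at h0
  have hX0 : (X 0 : MvPolynomial (Fin 3) F) = monomial (Finsupp.single 0 1) 1 := rfl
  have htarget : (X 0 : MvPolynomial (Fin 3) F) * (X 1) ^ (p ^ (e - 1) - 1) *
      (X 2) ^ (p ^ e - p ^ (e - 1) - 1) = monomial m 1 := by
    rw [hm, hX0, X_pow_eq_monomial, X_pow_eq_monomial]
    simp only [monomial_mul, one_mul]
  rw [htarget, coeff_monomial, if_pos rfl] at h0
  exact one_ne_zero h0
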